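/- arXiv:2605.16378 — 5 statements merged into one kernel-verified Lean document; each statement's English description precedes it below -/
import Mathlib

section
/- Let u, v : V → ℝ be two score vectors on a finite set V and let σ(u), σ(v) be the corresponding softmax distributions, σ(u)(a) = exp(u_a)/Σ_b exp(u_b). Then the total variation distance satisfies ‖σ(u) − σ(v)‖_TV ≤ (1/4)·(max_{a∈V}(u_a − v_a) − min_{a∈V}(u_a − v_a)). -/
open Finset

/-- The softmax distribution of a score vector `u : V → ℝ`. -/
noncomputable def softmax {V : Type*} [Fintype V] (u : V → ℝ) (a : V) : ℝ :=
  Real.exp (u a) / ∑ b : V, Real.exp (u b)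

/-- Total variation distance between two functions on a finite set. -/
noncomputable def tvDist {V : Type*} [Fintype V] (ν ν' : V → ℝ) : ℝ :=
  (1 / 2) * ∑ a : V, |ν a - ν' a|

lemma key_exp_ineq (s : ℝ) (hs : 0 ≤ s) :
    2 * (Real.exp s - 1) ≤ s * (Real.exp s + 1) := by
  set f : ℝ → ℝ := fun x => x * (Real.exp x + 1) - 2 * (Real.exp x - 1) with hf
  have hderiv : ∀ x : ℝ, HasDerivAt f (1 + (x - 1) * Real.exp x) x := by
    intro x
    have h1 : HasDerivAt (fun x : ℝ => x * (Real.exp x + 1))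
        (1 * (Real.exp x + 1) + x * Real.exp x) x :=
      (hasDerivAt_id x).mul ((Real.hasDerivAt_exp x).add_const 1)
    have h2 : HasDerivAt (fun x : ℝ => 2 * (Real.exp x - 1)) (2 * Real.exp x) x :=
      ((Real.hasDerivAt_exp x).sub_const 1).const_mul 2
    have := h1.sub h2
    exact this.congr_deriv (by ring)
  have hd : ∀ x : ℝ, 0 ≤ 1 + (x - 1) * Real.exp x := by
    intro x
    have h1 : 1 - x ≤ Real.exp (-x) := by
      have := Real.add_one_le_exp (-x); linarith
    have h2 : Real.exp (-x) * Real.exp x = 1 := by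
      rw [← Real.exp_add]; simp
    nlinarith [Real.exp_pos x]
  have hmono : MonotoneOn f (Set.Ici 0) := by
    apply monotoneOn_of_deriv_nonneg (convex_Ici 0)
    · exact (Continuous.continuousOn (by continuity))
    · intro x hx
      exact (hderiv x).differentiableAt.differentiableWithinAt
    · intro x hx
      rw [(hderiv x).deriv]
      exact hd x
  have h0 : f 0 = 0 := by simp [hf]
  have := hmono (Set.self_mem_Ici) (show s ∈ Set.Ici (0:ℝ) from hs) hs
  rw [h0] at this
  simp only [hf] at this
  linarith

set_option maxHeartbeats 1000000 in
/-- **softmax Lipschitz / TV bound.** For score vectors `u, v : V → ℝ` on a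
finite set `V`, `‖σ(u) − σ(v)‖_TV ≤ (1/4)·(max_a (u_a − v_a) − min_a (u_a − v_a))`. -/
theorem softmax_tv_le_quarter_oscillation {V : Type*} [Fintype V] [Nonempty V]
    (u v : V → ℝ) :
    tvDist (softmax u) (softmax v) ≤
      (1 / 4) *
        ((Finset.univ.sup' Finset.univ_nonempty fun a => u a - v a) -
          (Finset.univ.inf' Finset.univ_nonempty fun a => u a - v a)) := by
  classical
  set m := (Finset.univ.inf' Finset.univ_nonempty fun a => u a - v a) with hm
  set M := (Finset.univ.sup' Finset.univ_nonempty fun a => u a - v a) with hM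
  have hδm : ∀ a, m ≤ u a - v a := fun a => inf'_le (fun b => u b - v b) (mem_univ a)
  have hδM : ∀ a, u a - v a ≤ M := fun a => le_sup' (fun b => u b - v b) (mem_univ a)
  have hmM : m ≤ M := by
    obtain ⟨a⟩ := ‹Nonempty V›
    exact le_trans (hδm a) (hδM a)
  set Zu := ∑ b : V, Real.exp (u b) with hZu
  set Zv := ∑ b : V, Real.exp (v b) with hZv
  have hZu0 : 0 < Zu := sum_pos (fun b _ => Real.exp_pos _) univ_nonempty
  have hZv0 : 0 < Zv := sum_pos (fun b _ => Real.exp_pos _) univ_nonempty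
  have hexp_eq : ∀ a, Real.exp (u a) = Real.exp (v a) * Real.exp (u a - v a) := by
    intro a; rw [← Real.exp_add]; ring_nf
  have hSX : ∑ a : V, Real.exp (v a) * Real.exp (u a - v a) = Zu := by
    rw [hZu]; exact sum_congr rfl fun a _ => (hexp_eq a).symm
  rcases eq_or_lt_of_le hmM with heq | hlt
  · -- degenerate case: u - v constant
    have hconst : ∀ a, u a - v a = m := fun a => le_antisymm (heq ▸ hδM a) (hδm a)
    have hZ : Zu = Zv * Real.exp m := by
      rw [← hSX, hZv, sum_mul]
      exact sum_congr rfl fun a _ => by rw [hconst a]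
    have hsm : ∀ a, softmax u a = softmax v a := by
      intro a
      unfold softmax
      rw [← hZu, ← hZv, hexp_eq a, hconst a, hZ]
      rw [mul_comm Zv (Real.exp m), mul_comm (Real.exp (v a)) (Real.exp m),
        mul_div_mul_left _ _ (Real.exp_ne_zero m)]
    unfold tvDist
    rw [← heq]
    simp [hsm]
  · -- main case
    set A := Real.exp m with hA
    set B := Real.exp M with hB
    have hAB : A < B := Real.exp_lt_exp.mpr hlt
    have hA0 : 0 < A := Real.exp_pos m
    set E := Zu / Zv with hE
    have hE0 : 0 < E := div_pos hZu0 hZv0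
    have hZuE : Zu = E * Zv := by rw [hE, div_mul_cancel₀ _ hZv0.ne']
    have hXm : ∀ a, A ≤ Real.exp (u a - v a) := fun a => Real.exp_le_exp.mpr (hδm a)
    have hXM : ∀ a, Real.exp (u a - v a) ≤ B := fun a => Real.exp_le_exp.mpr (hδM a)
    have hAE : A ≤ E := by
      have h := sum_le_sum fun a (_ : a ∈ univ) =>
        mul_le_mul_of_nonneg_left (hXm a) (Real.exp_pos (v a)).le
      rw [hSX] at h
      have h2 : ∑ a : V, Real.exp (v a) * A = Zv * A := by rw [hZv, sum_mul]
      rw [h2] at h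
      rw [hE, le_div_iff₀ hZv0]; linarith
    have hEB : E ≤ B := by
      have h := sum_le_sum fun a (_ : a ∈ univ) =>
        mul_le_mul_of_nonneg_left (hXM a) (Real.exp_pos (v a)).le
      rw [hSX] at h
      have h2 : ∑ a : V, Real.exp (v a) * B = Zv * B := by rw [hZv, sum_mul]
      rw [h2] at h
      rw [hE, div_le_iff₀ hZv0]; linarith
    -- pointwise identity for |softmax u a - softmax v a|
    have hpoint : ∀ a, |softmax u a - softmax v a|
        = Real.exp (v a) * |Real.exp (u a - v a) - E| / (Zv * E) := by
      intro a
      have h1 : softmax u a - softmax v a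
          = Real.exp (v a) * (Real.exp (u a - v a) - E) / (Zv * E) := by
        unfold softmax
        rw [← hZu, ← hZv, hexp_eq a, hE]
        field_simp
      rw [h1, abs_div, abs_mul, abs_of_pos (Real.exp_pos _),
        abs_of_pos (mul_pos hZv0 hE0)]
    set S := ∑ a : V, Real.exp (v a) * |Real.exp (u a - v a) - E| with hS
    -- chord bound summed
    have hchord : (B - A) * S ≤ 2 * Zv * ((E - A) * (B - E)) := by
      have hpw : ∀ a, Real.exp (v a) * ((B - A) * |Real.exp (u a - v a) - E|)
          ≤ Real.exp (v a) * ((E - A) * (B - Real.exp (u a - v a))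
              + (B - E) * (Real.exp (u a - v a) - A)) := by
        intro a
        apply mul_le_mul_of_nonneg_left _ (Real.exp_pos _).le
        set X := Real.exp (u a - v a) with hXdef
        rcases le_total X E with h | h
        · rw [abs_of_nonpos (by linarith)]
          nlinarith [hXm a, hXM a, hAE, hEB]
        · rw [abs_of_nonneg (by linarith)]
          nlinarith [hXm a, hXM a, hAE, hEB]
      have hsum : ∑ a : V, Real.exp (v a) * ((B - A) * |Real.exp (u a - v a) - E|)
          ≤ ∑ a : V, Real.exp (v a) * ((E - A) * (B - Real.exp (u a - v a))
              + (B - E) * (Real.exp (u a - v a) - A)) :=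
        sum_le_sum fun a _ => hpw a
      have hL : ∑ a : V, Real.exp (v a) * ((B - A) * |Real.exp (u a - v a) - E|)
          = (B - A) * S := by
        rw [hS, mul_sum]; exact sum_congr rfl fun a _ => by ring
      have hR : ∑ a : V, Real.exp (v a) * ((E - A) * (B - Real.exp (u a - v a))
              + (B - E) * (Real.exp (u a - v a) - A))
          = ((E - A) * B - (B - E) * A) * Zv + ((B - E) - (E - A)) * Zu := by
        have : ∀ a, Real.exp (v a) * ((E - A) * (B - Real.exp (u a - v a))
              + (B - E) * (Real.exp (u a - v a) - A))
            = ((E - A) * B - (B - E) * A) * Real.exp (v a)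
              + ((B - E) - (E - A)) * (Real.exp (v a) * Real.exp (u a - v a)) := by
          intro a; ring
        rw [sum_congr rfl fun a _ => this a, sum_add_distrib, ← mul_sum, ← mul_sum,
          hSX, ← hZv]
      rw [hL] at hsum
      rw [hR, hZuE] at hsum
      nlinarith [hsum]
    -- algebraic finish
    set a0 := Real.exp (m / 2) with ha0
    set b0 := Real.exp (M / 2) with hb0
    have ha0p : 0 < a0 := Real.exp_pos _
    have hb0p : 0 < b0 := Real.exp_pos _
    have hab : a0 < b0 := Real.exp_lt_exp.mpr (by linarith)
    have hA2 : A = a0 * a0 := by rw [hA, ha0, ← Real.exp_add]; ring_nf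
    have hB2 : B = b0 * b0 := by rw [hB, hb0, ← Real.exp_add]; ring_nf
    have hb0e : b0 = a0 * Real.exp ((M - m) / 2) := by
      rw [hb0, ha0, ← Real.exp_add]; ring_nf
    have hkey : 2 * (Real.exp ((M - m) / 2) - 1)
        ≤ ((M - m) / 2) * (Real.exp ((M - m) / 2) + 1) :=
      key_exp_ineq _ (by linarith)
    have hTV : tvDist (softmax u) (softmax v) = (1 / 2) * (S / (Zv * E)) := by
      unfold tvDist
      rw [hS, sum_div]
      congr 1
      exact sum_congr rfl fun a _ => hpoint a
    rw [hTV]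
    clear_value S E Zv Zu A B a0 b0 m M
    have h3 : 4 * (b0 - a0) ≤ (M - m) * (b0 + a0) := by
      have h4 := mul_le_mul_of_nonneg_left hkey (by positivity : (0:ℝ) ≤ 2 * a0)
      rw [hb0e]
      nlinarith [h4]
    have h2 : (E - A) * (B - E) ≤ E * (b0 - a0) ^ 2 := by
      nlinarith [sq_nonneg (E - a0 * b0), hA2, hB2]
    have h12 : (b0 - a0) * ((b0 + a0) * S) ≤ (b0 - a0) * (2 * Zv * E * (b0 - a0)) := by
      have hthis := mul_le_mul_of_nonneg_left h2 (show (0:ℝ) ≤ 2 * Zv by positivity)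
      have hBA : B - A = (b0 - a0) * (b0 + a0) := by rw [hA2, hB2]; ring
      calc (b0 - a0) * ((b0 + a0) * S) = (B - A) * S := by rw [hBA]; ring
        _ ≤ 2 * Zv * ((E - A) * (B - E)) := hchord
        _ ≤ 2 * Zv * (E * (b0 - a0) ^ 2) := hthis
        _ = (b0 - a0) * (2 * Zv * E * (b0 - a0)) := by ring
    have h5 : (b0 + a0) * S ≤ 2 * Zv * E * (b0 - a0) :=
      le_of_mul_le_mul_left h12 (by linarith)
    have h7 : 4 * S ≤ (M - m) * (2 * Zv * E) := by
      have h6 := mul_le_mul_of_nonneg_left h3 (show (0:ℝ) ≤ Zv * E by positivity)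
      nlinarith [h5, h6, ha0p, hb0p]
    rw [show (1 / 2 : ℝ) * (S / (Zv * E)) = S / (2 * (Zv * E)) by ring,
      div_le_iff₀ (show (0:ℝ) < 2 * (Zv * E) by positivity)]
    nlinarith [h7]
end

section
/- For all sites i ≠ j and all τ > 0, the influence coefficient is bounded by the cross-site score oscillation: c_{ij}(τ) ≤ Δ_{ij}/(4τ). -/
open Finset

/-- Temperature-scaled conditionals induced by local scores `s`:
`p_{θ,τ}(a | x_{-i}) = exp(s_i(a; x_{-i})/τ) / Σ_b exp(s_i(b; x_{-i})/τ)`. -/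
noncomputable def pTau {V : Type*} [Fintype V] {n : ℕ}
    (s : Fin n → (Fin n → V) → V → ℝ) (τ : ℝ)
    (i : Fin n) (x : Fin n → V) (a : V) : ℝ :=
  Real.exp (s i x a / τ) / ∑ b : V, Real.exp (s i x b / τ)

/-- The influence coefficient
`c_{ij}(τ) = sup { ‖p_{θ,τ}(·|x_{-i}) − p_{θ,τ}(·|y_{-i})‖_TV : x_k = y_k ∀ k ≠ j }`. -/
noncomputable def influenceCoeff {V : Type*} [Fintype V] {n : ℕ}
    (s : Fin n → (Fin n → V) → V → ℝ) (τ : ℝ) (i j : Fin n) : ℝ :=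
  sSup {d : ℝ | ∃ x y : Fin n → V, (∀ k, k ≠ j → x k = y k) ∧
    d = tvDist (pTau s τ i x) (pTau s τ i y)}

/-- The cross-site score oscillation
`Δ_{ij} = sup { max_a (s_i(a;x_{-i}) − s_i(a;y_{-i})) − min_a (s_i(a;x_{-i}) − s_i(a;y_{-i}))
: x_k = y_k ∀ k ≠ j }`. -/
noncomputable def scoreOscillation {V : Type*} [Fintype V] [Nonempty V] {n : ℕ}
    (s : Fin n → (Fin n → V) → V → ℝ) (i j : Fin n) : ℝ :=
  sSup {d : ℝ | ∃ x y : Fin n → V, (∀ k, k ≠ j → x k = y k) ∧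
    d = (Finset.univ.sup' Finset.univ_nonempty fun a => s i x a - s i y a) -
        (Finset.univ.inf' Finset.univ_nonempty fun a => s i x a - s i y a)}


lemma tanh_aux (u : ℝ) (hu : 0 ≤ u) : (1 - u) * Real.exp (2 * u) ≤ 1 + u := by
  have key : ∀ x : ℝ, HasDerivAt (fun x => (1 + x) * Real.exp (-x) - (1 - x) * Real.exp x)
      (x * (Real.exp x - Real.exp (-x))) x := by
    intro x
    have h1 : HasDerivAt (fun x : ℝ => Real.exp (-x)) (-Real.exp (-x)) x := by
      simpa using (hasDerivAt_neg x).exp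
    have h2 : HasDerivAt (fun x : ℝ => (1 + x) * Real.exp (-x))
        (1 * Real.exp (-x) + (1 + x) * (-Real.exp (-x))) x :=
      (((hasDerivAt_id x).const_add 1)).mul h1
    have h3 : HasDerivAt (fun x : ℝ => (1 - x) * Real.exp x)
        ((-1) * Real.exp x + (1 - x) * Real.exp x) x :=
      ((hasDerivAt_id x).const_sub 1).mul (Real.hasDerivAt_exp x)
    have := h2.sub h3
    exact this.congr_deriv (by ring)
  have hmono : Monotone (fun x => (1 + x) * Real.exp (-x) - (1 - x) * Real.exp x) := by
    apply monotone_of_deriv_nonneg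
    · exact fun x => (key x).differentiableAt
    · intro x
      rw [(key x).deriv]
      rcases le_total 0 x with hx | hx
      · exact mul_nonneg hx (sub_nonneg.mpr (Real.exp_le_exp.mpr (by linarith)))
      · have h4 : Real.exp x ≤ Real.exp (-x) := Real.exp_le_exp.mpr (by linarith)
        nlinarith [h4]
  have h0 : (0 : ℝ) ≤ (1 + u) * Real.exp (-u) - (1 - u) * Real.exp u := by
    have := hmono hu
    simpa using this
  have hpos := Real.exp_pos u
  have hmul : Real.exp u * Real.exp u = Real.exp (2 * u) := by
    rw [← Real.exp_add]; ring_nf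
  have hinv : Real.exp (-u) * Real.exp u = 1 := by
    rw [← Real.exp_add]; simp
  nlinarith [h0, hpos, mul_le_mul_of_nonneg_right h0 hpos.le]

/-- `e^s - 1 ≤ (s/2)(e^s + 1)` for `s ≥ 0`. -/
lemma tanh_le (s : ℝ) (hs : 0 ≤ s) :
    Real.exp s - 1 ≤ (s / 2) * (Real.exp s + 1) := by
  have := tanh_aux (s / 2) (by linarith)
  have h2 : 2 * (s / 2) = s := by ring
  rw [h2] at this
  nlinarith [Real.exp_pos s]

/-- Scalar chord bound. -/
lemma chord_scalar (a b : ℝ) (ha : 0 ≤ a) (hb : 0 ≤ b) :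
    (Real.exp b - 1) * (1 - Real.exp (-a)) ≤
      ((a + b) / 4) * (Real.exp b - Real.exp (-a)) := by
  set E := Real.exp a with hE
  set F := Real.exp b with hF
  have hEpos : 0 < E := Real.exp_pos a
  have hFpos : 0 < F := Real.exp_pos b
  have hEF : Real.exp (a + b) = E * F := Real.exp_add a b
  have hsq : Real.exp (a / 2) * Real.exp (a / 2) = E := by rw [← Real.exp_add]; ring_nf; exact hE.symm
  have hsqF : Real.exp (b / 2) * Real.exp (b / 2) = F := by rw [← Real.exp_add]; ring_nf; exact hF.symm
  have hsqEF : Real.exp (a / 2) * Real.exp (b / 2) = Real.exp ((a + b) / 2) := by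
    rw [← Real.exp_add]; ring_nf
  have h1 : (E - 1) * (F - 1) ≤ (Real.exp ((a + b) / 2) - 1) ^ 2 := by
    have hsum := sq_nonneg (Real.exp (a / 2) - Real.exp (b / 2))
    have hEFhalf : Real.exp ((a + b) / 2) * Real.exp ((a + b) / 2) = E * F := by
      rw [← Real.exp_add, show (a + b) / 2 + (a + b) / 2 = a + b from by ring]
      exact hEF
    nlinarith [hsum]
  have h2 : Real.exp ((a + b) / 2) - 1 ≤ ((a + b) / 4) * (Real.exp ((a + b) / 2) + 1) := by
    have := tanh_le ((a + b) / 2) (by linarith)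
    have : Real.exp ((a + b) / 2) - 1 ≤ ((a + b) / 2 / 2) * (Real.exp ((a + b) / 2) + 1) := this
    linarith [this]
  have hge1 : (1 : ℝ) ≤ Real.exp ((a + b) / 2) := Real.one_le_exp (by linarith)
  have h3 : (E - 1) * (F - 1) ≤ ((a + b) / 4) * (E * F - 1) := by
    have hEFhalf : Real.exp ((a + b) / 2) * Real.exp ((a + b) / 2) = E * F := by
      rw [← Real.exp_add, show (a + b) / 2 + (a + b) / 2 = a + b from by ring]
      exact hEF
    nlinarith [h1, h2, hge1]
  have hnegA : Real.exp (-a) = E⁻¹ := Real.exp_neg a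
  rw [hnegA]
  have e1 : (1 : ℝ) - E⁻¹ = (E - 1) / E := by field_simp
  have e2 : F - E⁻¹ = (E * F - 1) / E := by field_simp
  rw [e1, e2, ← mul_div_assoc, ← mul_div_assoc]
  exact (div_le_div_iff_of_pos_right hEpos).mpr (by nlinarith [h3])

lemma softmax_tv_le {V : Type*} [Fintype V] [Nonempty V] (u v : V → ℝ) :
    (1 / 2) * ∑ a : V, |Real.exp (u a) / (∑ b : V, Real.exp (u b)) -
        Real.exp (v a) / (∑ b : V, Real.exp (v b))| ≤
    ((univ.sup' univ_nonempty fun a => u a - v a) -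
     (univ.inf' univ_nonempty fun a => u a - v a)) / 4 := by
  set Zu := ∑ b : V, Real.exp (u b) with hZudef
  set Zv := ∑ b : V, Real.exp (v b) with hZvdef
  have hZupos : 0 < Zu := Finset.sum_pos (fun b _ => Real.exp_pos _) univ_nonempty
  have hZvpos : 0 < Zv := Finset.sum_pos (fun b _ => Real.exp_pos _) univ_nonempty
  set c := Real.log (Zu / Zv) with hcdef
  have hec : Real.exp c = Zu / Zv := Real.exp_log (div_pos hZupos hZvpos)
  set q : V → ℝ := fun a => Real.exp (v a) / Zv with hqdef
  set W : V → ℝ := fun a => Real.exp (u a - v a - c) with hWdef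
  have hqpos : ∀ a, 0 < q a := fun a => div_pos (Real.exp_pos _) hZvpos
  have hqsum : ∑ a, q a = 1 := by
    simp only [hqdef]
    rw [← Finset.sum_div, ← hZvdef, div_self hZvpos.ne']
  have hp : ∀ a, Real.exp (u a) / Zu = q a * W a := by
    intro a
    simp only [hqdef, hWdef]
    rw [Real.exp_sub, Real.exp_sub, hec]
    field_simp
  have hWsum : ∑ a, q a * W a = 1 := by
    rw [Finset.sum_congr rfl fun a _ => (hp a).symm, ← Finset.sum_div, ← hZudef,
      div_self hZupos.ne']
  set m := univ.inf' univ_nonempty (fun a => u a - v a) with hmdef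
  set M := univ.sup' univ_nonempty (fun a => u a - v a) with hMdef
  have hmle : ∀ a : V, m ≤ u a - v a := fun a => Finset.inf'_le _ (mem_univ a)
  have hMge : ∀ a : V, u a - v a ≤ M := fun a => by
    rw [hMdef]; exact Finset.le_sup' (fun a => u a - v a) (mem_univ a)
  set α := Real.exp (m - c) with hαdef
  set β := Real.exp (M - c) with hβdef
  have hαpos : 0 < α := Real.exp_pos _
  have hWlow : ∀ a, α ≤ W a := fun a => Real.exp_le_exp.mpr (by linarith [hmle a])
  have hWhigh : ∀ a, W a ≤ β := fun a => Real.exp_le_exp.mpr (by linarith [hMge a])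
  have hβ : 1 ≤ β := by
    calc (1:ℝ) = ∑ a, q a * W a := hWsum.symm
    _ ≤ ∑ a, q a * β := Finset.sum_le_sum fun a _ =>
        mul_le_mul_of_nonneg_left (hWhigh a) (hqpos a).le
    _ = β := by rw [← Finset.sum_mul, hqsum, one_mul]
  have hα : α ≤ 1 := by
    calc α = ∑ a, q a * α := by rw [← Finset.sum_mul, hqsum, one_mul]
    _ ≤ ∑ a, q a * W a := Finset.sum_le_sum fun a _ =>
        mul_le_mul_of_nonneg_left (hWlow a) (hqpos a).le
    _ = 1 := hWsum
  have hmM : m ≤ M := by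
    have a0 := Classical.arbitrary V
    linarith [hmle a0, hMge a0]
  -- rewrite the goal sum
  have key : (1 / 2) * ∑ a : V, |Real.exp (u a) / Zu - Real.exp (v a) / Zv| =
      ∑ a, q a * max (W a - 1) 0 := by
    have h1 : ∀ a : V, |Real.exp (u a) / Zu - Real.exp (v a) / Zv| =
        q a * |W a - 1| := by
      intro a
      rw [hp a, show q a * W a - Real.exp (v a) / Zv = q a * (W a - 1) from by
        simp only [hqdef]; ring, abs_mul, abs_of_pos (hqpos a)]
    have h2 : ∀ a : V, q a * |W a - 1| = 2 * (q a * max (W a - 1) 0) - q a * (W a - 1) := by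
      intro a
      rcases le_total (W a) 1 with h | h
      · rw [abs_of_nonpos (by linarith), max_eq_right (by linarith)]; ring
      · rw [abs_of_nonneg (by linarith), max_eq_left (by linarith)]; ring
    rw [Finset.sum_congr rfl fun a _ => h1 a, Finset.sum_congr rfl fun a _ => h2 a,
      Finset.sum_sub_distrib]
    have h3 : ∑ a, q a * (W a - 1) = 0 := by
      simp only [mul_sub, mul_one]
      rw [Finset.sum_sub_distrib, hWsum, hqsum]; ring
    rw [h3, ← Finset.mul_sum]; ring
  rw [key]
  rcases eq_or_lt_of_le hmM with hMm | hMm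
  · -- degenerate case m = M : all W a = 1
    have hαβ : α = β := by rw [hαdef, hβdef, hMm]
    have hW1 : ∀ a, q a * max (W a - 1) 0 = 0 := by
      intro a
      have h1 : W a ≤ 1 := by
        have := hWhigh a; rw [← hαβ] at this; linarith [hα, this]
      rw [max_eq_right (by linarith), mul_zero]
    rw [Finset.sum_congr rfl fun a _ => hW1 a, Finset.sum_const, smul_zero]
    rw [← hMm]; simp
  · have hαβ : α < β := Real.exp_lt_exp.mpr (by linarith)
    have chord : ∀ a, (β - α) * (q a * max (W a - 1) 0) ≤ (β - 1) * (q a * (W a - α)) := by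
      intro a
      rcases le_total (W a) 1 with h | h
      · rw [max_eq_right (by linarith), mul_zero, mul_zero]
        exact mul_nonneg (by linarith) (mul_nonneg (hqpos a).le (by linarith [hWlow a]))
      · rw [max_eq_left (by linarith)]
        have h1 : 0 ≤ (1 - α) * (β - W a) := mul_nonneg (by linarith) (by linarith [hWhigh a])
        nlinarith [mul_nonneg (hqpos a).le h1]
    have hsum_chord : (β - α) * ∑ a, q a * max (W a - 1) 0 ≤ (β - 1) * (1 - α) := by
      calc (β - α) * ∑ a, q a * max (W a - 1) 0
          = ∑ a, (β - α) * (q a * max (W a - 1) 0) := by rw [Finset.mul_sum]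
        _ ≤ ∑ a, (β - 1) * (q a * (W a - α)) := Finset.sum_le_sum fun a _ => chord a
        _ = (β - 1) * (1 - α) := by
            rw [← Finset.mul_sum]
            congr 1
            simp only [mul_sub]
            rw [Finset.sum_sub_distrib, hWsum, ← Finset.sum_mul, hqsum, one_mul]
    have hscalar : (β - 1) * (1 - α) ≤ ((M - m) / 4) * (β - α) := by
      have hcm : 0 ≤ c - m := by
        have := Real.exp_le_one_iff.mp hα; linarith
      have hMc : 0 ≤ M - c := by
        have := Real.one_le_exp_iff.mp hβ; linarith
      have h := chord_scalar (c - m) (M - c) hcm hMc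
      rw [show -(c - m) = m - c from by ring, show c - m + (M - c) = M - m from by ring] at h
      exact h
    have hβα : 0 < β - α := by linarith
    have : (β - α) * ∑ a, q a * max (W a - 1) 0 ≤ (β - α) * ((M - m) / 4) := by
      calc (β - α) * ∑ a, q a * max (W a - 1) 0 ≤ (β - 1) * (1 - α) := hsum_chord
        _ ≤ ((M - m) / 4) * (β - α) := hscalar
        _ = (β - α) * ((M - m) / 4) := by ring
    exact le_of_mul_le_mul_left this hβα

lemma sup'_div_aux {V : Type*} [Fintype V] [Nonempty V] (g : V → ℝ) {τ : ℝ} (hτ : 0 < τ) :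
    (univ.sup' univ_nonempty fun a => g a / τ) = (univ.sup' univ_nonempty g) / τ := by
  apply le_antisymm
  · exact Finset.sup'_le _ _ fun a _ =>
      (div_le_div_iff_of_pos_right hτ).mpr (Finset.le_sup' g (mem_univ a))
  · obtain ⟨a, -, ha⟩ := Finset.exists_mem_eq_sup' univ_nonempty g
    rw [ha]
    exact Finset.le_sup' (fun a => g a / τ) (mem_univ a)

lemma inf'_div_aux {V : Type*} [Fintype V] [Nonempty V] (g : V → ℝ) {τ : ℝ} (hτ : 0 < τ) :
    (univ.inf' univ_nonempty fun a => g a / τ) = (univ.inf' univ_nonempty g) / τ := by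
  apply le_antisymm
  · obtain ⟨a, -, ha⟩ := Finset.exists_mem_eq_inf' univ_nonempty g
    rw [ha]
    exact Finset.inf'_le (fun a => g a / τ) (mem_univ a)
  · exact Finset.le_inf' _ _ fun a _ =>
      (div_le_div_iff_of_pos_right hτ).mpr (Finset.inf'_le g (mem_univ a))


/-- For all sites `i ≠ j` and all `τ > 0`,
`c_{ij}(τ) ≤ Δ_{ij} / (4τ)`. -/
theorem influence_le_oscillation_div {V : Type*} [Fintype V] [Nonempty V]
    (n : ℕ) (s : Fin n → (Fin n → V) → V → ℝ)
    (hloc : ∀ (i : Fin n) (x y : Fin n → V), (∀ k, k ≠ i → x k = y k) → s i x = s i y)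
    (τ : ℝ) (hτ : 0 < τ) (i j : Fin n) (hij : i ≠ j) :
    influenceCoeff s τ i j ≤ scoreOscillation s i j / (4 * τ) := by
  classical
  have h4τ : (0:ℝ) < 4 * τ := by linarith
  set T := {d : ℝ | ∃ x y : Fin n → V, (∀ k, k ≠ j → x k = y k) ∧
    d = (Finset.univ.sup' Finset.univ_nonempty fun a => s i x a - s i y a) -
        (Finset.univ.inf' Finset.univ_nonempty fun a => s i x a - s i y a)} with hT
  have hosc : scoreOscillation s i j = sSup T := rfl
  have hTsub : T ⊆ Set.range (fun p : (Fin n → V) × (Fin n → V) =>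
      (Finset.univ.sup' Finset.univ_nonempty fun a => s i p.1 a - s i p.2 a) -
      (Finset.univ.inf' Finset.univ_nonempty fun a => s i p.1 a - s i p.2 a)) := by
    rintro d ⟨x, y, -, rfl⟩; exact ⟨(x, y), rfl⟩
  have hbdd : BddAbove T := ((Set.finite_range _).subset hTsub).bddAbove
  have h0T : (0:ℝ) ∈ T := by
    rw [hT]
    refine ⟨(fun _ => Classical.arbitrary V), (fun _ => Classical.arbitrary V),
      fun _ _ => rfl, ?_⟩
    simp
  have hsup0 : 0 ≤ sSup T := le_csSup hbdd h0T
  rw [hosc]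
  apply Real.sSup_le ?_ (div_nonneg hsup0 h4τ.le)
  rintro d ⟨x, y, hxy, rfl⟩
  have hcore := softmax_tv_le (fun a => s i x a / τ) (fun a => s i y a / τ)
  simp only [div_sub_div_same] at hcore
  rw [sup'_div_aux (fun a => s i x a - s i y a) hτ,
    inf'_div_aux (fun a => s i x a - s i y a) hτ] at hcore
  have hmem : (Finset.univ.sup' Finset.univ_nonempty fun a => s i x a - s i y a) -
      (Finset.univ.inf' Finset.univ_nonempty fun a => s i x a - s i y a) ∈ T := by
    rw [hT]; exact ⟨x, y, hxy, rfl⟩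
  have hle := le_csSup hbdd hmem
  calc tvDist (pTau s τ i x) (pTau s τ i y)
      ≤ ((Finset.univ.sup' Finset.univ_nonempty fun a => s i x a - s i y a) / τ -
         (Finset.univ.inf' Finset.univ_nonempty fun a => s i x a - s i y a) / τ) / 4 := hcore
    _ = ((Finset.univ.sup' Finset.univ_nonempty fun a => s i x a - s i y a) -
         (Finset.univ.inf' Finset.univ_nonempty fun a => s i x a - s i y a)) / (4 * τ) := by
        rw [div_sub_div_same, div_div]; ring
    _ ≤ sSup T / (4 * τ) := (div_le_div_iff_of_pos_right h4τ).mpr hle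
end

section
/- Let B ⊆ X be a basin satisfying the uniform local margin condition with margin Δ⋆ > 0. Then for every x ∈ B, the one-step escape probability satisfies P_τ(x, B^c) ≤ |V| · exp(−Δ⋆/τ). -/
open Finset

/-- The Glauber (single-site resampling) kernel on `X = V^n`. -/
noncomputable def glauberKernel {V : Type*} [Fintype V] [DecidableEq V] (n : ℕ)
    (p : Fin n → (Fin n → V) → V → ℝ) (x x' : Fin n → V) : ℝ :=
  (1 / (n : ℝ)) * ∑ i : Fin n, (if ∀ j, j ≠ i → x j = x' j then p i x (x' i) else 0)

/-- The uniform local margin condition on a basin `B` with margin `Δ⋆`: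
for every `x ∈ B` and every site `i` at which some single-site change exits `B`,
`x_i` maximizes `s_i(·; x_{-i})`, and every exit-causing token is beaten by margin `Δ⋆`. -/
def UniformLocalMargin {V : Type*} [Fintype V] [DecidableEq V] {n : ℕ}
    (s : Fin n → (Fin n → V) → V → ℝ) (B : Finset (Fin n → V)) (Δstar : ℝ) : Prop :=
  ∀ x ∈ B, ∀ i : Fin n,
    (∃ a : V, Function.update x i a ∉ B) →
    (∀ b : V, s i x b ≤ s i x (x i)) ∧
    (∀ a : V, a ≠ x i → Function.update x i a ∉ B → Δstar ≤ s i x (x i) - s i x a)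

/-- **exponentially small escape probability.** If the basin `B` satisfies the
uniform local margin condition with margin `Δ⋆ > 0`, then for every `x ∈ B` the one-step
escape probability satisfies `P_τ(x, Bᶜ) ≤ |V|·exp(−Δ⋆/τ)`. -/
theorem escape_probability_bound {V : Type*} [Fintype V] [DecidableEq V]
    (n : ℕ) (hn : 0 < n) (s : Fin n → (Fin n → V) → V → ℝ)
    (hloc : ∀ (i : Fin n) (x y : Fin n → V), (∀ k, k ≠ i → x k = y k) → s i x = s i y)
    (τ : ℝ) (hτ : 0 < τ)
    (B : Finset (Fin n → V)) (Δstar : ℝ) (hΔ : 0 < Δstar)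
    (hmargin : UniformLocalMargin s B Δstar) :
    ∀ x ∈ B,
      ∑ x' ∈ Finset.univ.filter (fun x' => x' ∉ B), glauberKernel n (pTau s τ) x x'
        ≤ (Fintype.card V : ℝ) * Real.exp (-Δstar / τ) := by
  intro x hx
  have key : ∀ i : Fin n,
      (∑ x' ∈ Finset.univ.filter (fun x' => x' ∉ B),
        (if ∀ j, j ≠ i → x j = x' j then pTau s τ i x (x' i) else 0))
      ≤ (Fintype.card V : ℝ) * Real.exp (-Δstar / τ) := by
    intro i
    classical
    have hsum : (∑ x' ∈ Finset.univ.filter (fun x' => x' ∉ B),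
        (if ∀ j, j ≠ i → x j = x' j then pTau s τ i x (x' i) else 0))
        = ∑ a ∈ Finset.univ.filter (fun a : V => Function.update x i a ∉ B),
            pTau s τ i x a := by
      rw [← Finset.sum_filter, Finset.filter_filter]
      refine Finset.sum_bij (fun x' _ => x' i) ?_ ?_ ?_ ?_
      · intro x' hx'
        simp only [Finset.mem_filter, Finset.mem_univ, true_and] at hx' ⊢
        have hupd : Function.update x i (x' i) = x' := by
          funext j
          by_cases hj : j = i
          · subst hj; simp
          · simp [Function.update_of_ne hj, hx'.2 j hj]
        rw [hupd]; exact hx'.1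
      · intro x' hx' y' hy' h
        simp only [Finset.mem_filter, Finset.mem_univ, true_and] at hx' hy'
        funext j
        by_cases hj : j = i
        · subst hj; exact h
        · rw [← hx'.2 j hj, ← hy'.2 j hj]
      · intro a ha
        simp only [Finset.mem_filter, Finset.mem_univ, true_and] at ha
        refine ⟨Function.update x i a, ?_, ?_⟩
        · simp only [Finset.mem_filter, Finset.mem_univ, true_and]
          exact ⟨ha, fun j hj => (Function.update_of_ne hj a x).symm⟩
        · simp
      · intro x' hx'; rfl
    rw [hsum]
    have hbound : ∀ a ∈ Finset.univ.filter (fun a : V => Function.update x i a ∉ B),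
        pTau s τ i x a ≤ Real.exp (-Δstar / τ) := by
      intro a ha
      simp only [Finset.mem_filter, Finset.mem_univ, true_and] at ha
      have hane : a ≠ x i := by
        intro h; subst h
        apply ha
        have : Function.update x i (x i) = x := Function.update_eq_self i x
        rw [this]; exact hx
      obtain ⟨hmax, hmarg⟩ := hmargin x hx i ⟨a, ha⟩
      have hΔa := hmarg a hane ha
      have hden_ge : Real.exp (s i x (x i) / τ) ≤ ∑ b : V, Real.exp (s i x b / τ) :=
        Finset.single_le_sum (f := fun b => Real.exp (s i x b / τ)) (fun b _ => (Real.exp_pos _).le) (Finset.mem_univ (x i))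
      have hden_pos : (0:ℝ) < Real.exp (s i x (x i) / τ) := Real.exp_pos _
      have h1 : pTau s τ i x a ≤ Real.exp (s i x a / τ) / Real.exp (s i x (x i) / τ) := by
        apply div_le_div_of_nonneg_left (Real.exp_pos _).le hden_pos hden_ge
      have h2 : Real.exp (s i x a / τ) / Real.exp (s i x (x i) / τ)
          = Real.exp ((s i x a - s i x (x i)) / τ) := by
        rw [← Real.exp_sub, sub_div]
      have h3 : (s i x a - s i x (x i)) / τ ≤ -Δstar / τ := by
        gcongr
        linarith
      calc pTau s τ i x a ≤ Real.exp ((s i x a - s i x (x i)) / τ) := by rw [← h2]; exact h1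
        _ ≤ Real.exp (-Δstar / τ) := Real.exp_le_exp.mpr h3
    calc ∑ a ∈ Finset.univ.filter (fun a : V => Function.update x i a ∉ B), pTau s τ i x a
        ≤ ∑ _a ∈ Finset.univ.filter (fun a : V => Function.update x i a ∉ B),
            Real.exp (-Δstar / τ) := Finset.sum_le_sum hbound
      _ = ((Finset.univ.filter (fun a : V => Function.update x i a ∉ B)).card : ℝ)
            * Real.exp (-Δstar / τ) := by rw [Finset.sum_const, nsmul_eq_mul]
      _ ≤ (Fintype.card V : ℝ) * Real.exp (-Δstar / τ) := by
          apply mul_le_mul_of_nonneg_right _ (Real.exp_pos _).le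
          exact_mod_cast Finset.card_filter_le _ _
  have hrw : ∑ x' ∈ Finset.univ.filter (fun x' => x' ∉ B), glauberKernel n (pTau s τ) x x'
      = (1 / (n:ℝ)) * ∑ i : Fin n, ∑ x' ∈ Finset.univ.filter (fun x' => x' ∉ B),
          (if ∀ j, j ≠ i → x j = x' j then pTau s τ i x (x' i) else 0) := by
    simp only [glauberKernel]
    rw [← Finset.mul_sum, Finset.sum_comm]
  rw [hrw]
  have hsum_le : ∑ i : Fin n, ∑ x' ∈ Finset.univ.filter (fun x' => x' ∉ B),
      (if ∀ j, j ≠ i → x j = x' j then pTau s τ i x (x' i) else 0)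
      ≤ (n : ℝ) * ((Fintype.card V : ℝ) * Real.exp (-Δstar / τ)) := by
    calc _ ≤ ∑ _i : Fin n, (Fintype.card V : ℝ) * Real.exp (-Δstar / τ) :=
          Finset.sum_le_sum fun i _ => key i
      _ = (n : ℝ) * ((Fintype.card V : ℝ) * Real.exp (-Δstar / τ)) := by
          rw [Finset.sum_const, Finset.card_univ, Fintype.card_fin, nsmul_eq_mul]
  have hn' : (0:ℝ) < (n:ℝ) := by exact_mod_cast hn
  calc (1 / (n:ℝ)) * ∑ i : Fin n, ∑ x' ∈ Finset.univ.filter (fun x' => x' ∉ B),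
        (if ∀ j, j ≠ i → x j = x' j then pTau s τ i x (x' i) else 0)
      ≤ (1 / (n:ℝ)) * ((n : ℝ) * ((Fintype.card V : ℝ) * Real.exp (-Δstar / τ))) := by
        apply mul_le_mul_of_nonneg_left hsum_le (by positivity)
    _ = (Fintype.card V : ℝ) * Real.exp (-Δstar / τ) := by
        field_simp
end

section
/- Let B ⊆ X satisfy the uniform local margin condition with margin Δ⋆ > 0, and let μ_τ be a stationary distribution of P_τ with μ_τ(B) > 0. Then the conductance of B satisfies Φ_τ(B) := (Σ_{x∈B} μ_τ(x) P_τ(x, B^c)) / μ_τ(B) ≤ |V| · exp(−Δ⋆/τ). -/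
open Finset

/-- **conductance bound.** If `B` satisfies the uniform local margin condition
with margin `Δ⋆ > 0` and `μ` is a stationary distribution of `P_τ` with `μ(B) > 0`, then the
conductance of `B` satisfies
`Φ_τ(B) = (Σ_{x∈B} μ(x) P_τ(x,Bᶜ)) / μ(B) ≤ |V|·exp(−Δ⋆/τ)`. -/
theorem conductance_bound {V : Type*} [Fintype V] [DecidableEq V]
    (n : ℕ) (hn : 0 < n) (s : Fin n → (Fin n → V) → V → ℝ)
    (hloc : ∀ (i : Fin n) (x y : Fin n → V), (∀ k, k ≠ i → x k = y k) → s i x = s i y)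
    (τ : ℝ) (hτ : 0 < τ)
    (B : Finset (Fin n → V)) (Δstar : ℝ) (hΔ : 0 < Δstar)
    (hmargin : UniformLocalMargin s B Δstar)
    (μ : (Fin n → V) → ℝ)
    (hμ0 : ∀ x, 0 ≤ μ x) (hμ1 : ∑ x : Fin n → V, μ x = 1)
    (hμstat : ∀ y : Fin n → V,
      ∑ x : Fin n → V, μ x * glauberKernel n (pTau s τ) x y = μ y)
    (hμB : 0 < ∑ x ∈ B, μ x) :
    (∑ x ∈ B, μ x *
        ∑ x' ∈ Finset.univ.filter (fun x' => x' ∉ B), glauberKernel n (pTau s τ) x x') /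
        (∑ x ∈ B, μ x)
      ≤ (Fintype.card V : ℝ) * Real.exp (-Δstar / τ) := by
  set E := Real.exp (-Δstar / τ) with hE
  have hE0 : 0 ≤ E := Real.exp_nonneg _
  have hCE0 : 0 ≤ (Fintype.card V : ℝ) * E :=
    mul_nonneg (Nat.cast_nonneg _) hE0
  have pnonneg : ∀ (i : Fin n) (x : Fin n → V) (a : V), 0 ≤ pTau s τ i x a := by
    intro i x a
    exact div_nonneg (Real.exp_nonneg _)
      (Finset.sum_nonneg fun b _ => (Real.exp_nonneg _))
  -- key per-state bound
  have key : ∀ x ∈ B, ∑ x' ∈ Finset.univ.filter (fun x' => x' ∉ B),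
      glauberKernel n (pTau s τ) x x' ≤ (Fintype.card V : ℝ) * E := by
    intro x hx
    have site : ∀ i : Fin n,
        ∑ x' ∈ Finset.univ.filter (fun x' => x' ∉ B),
          (if ∀ j, j ≠ i → x j = x' j then pTau s τ i x (x' i) else 0)
          ≤ (Fintype.card V : ℝ) * E := by
      intro i
      have hrw : ∑ x' ∈ Finset.univ.filter (fun x' => x' ∉ B),
          (if ∀ j, j ≠ i → x j = x' j then pTau s τ i x (x' i) else 0)
          = ∑ x' ∈ (Finset.univ.filter (fun x' => x' ∉ B)).filter
              (fun x' => ∀ j, j ≠ i → x j = x' j), pTau s τ i x (x' i) :=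
        (Finset.sum_filter _ _).symm
      by_cases hex : ∃ a : V, Function.update x i a ∉ B
      · obtain ⟨hmax, hgap⟩ := hmargin x hx i hex
        have pbound : ∀ a : V, a ≠ x i → Function.update x i a ∉ B →
            pTau s τ i x a ≤ E := by
          intro a ha haB
          have h1 : Real.exp (s i x (x i) / τ) ≤ ∑ b : V, Real.exp (s i x b / τ) :=
            Finset.single_le_sum (f := fun b => Real.exp (s i x b / τ)) (fun b _ => (Real.exp_pos _).le) (Finset.mem_univ _)
          have hD : 0 < ∑ b : V, Real.exp (s i x b / τ) :=
            lt_of_lt_of_le (Real.exp_pos _) h1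
          rw [pTau, div_le_iff₀ hD]
          have hsa : s i x a ≤ s i x (x i) - Δstar := by
            have := hgap a ha haB; linarith
          calc Real.exp (s i x a / τ)
              ≤ Real.exp ((s i x (x i) - Δstar) / τ) := by
                exact Real.exp_le_exp.2 ((div_le_div_iff_of_pos_right hτ).2 hsa)
            _ = E * Real.exp (s i x (x i) / τ) := by
                rw [hE, ← Real.exp_add]; congr 1; field_simp; ring
            _ ≤ E * ∑ b : V, Real.exp (s i x b / τ) :=
                mul_le_mul_of_nonneg_left h1 hE0
        set T : Finset V := Finset.univ.filter
          (fun a : V => a ≠ x i ∧ Function.update x i a ∉ B) with hT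
        have hsub : (Finset.univ.filter (fun x' => x' ∉ B)).filter
            (fun x' => ∀ j, j ≠ i → x j = x' j)
            ⊆ T.image (fun a => Function.update x i a) := by
          intro x' hx'
          simp only [Finset.mem_filter, Finset.mem_univ, true_and] at hx'
          obtain ⟨hx'B, hagree⟩ := hx'
          have hxeq : x' = Function.update x i (x' i) := by
            funext j
            by_cases hj : j = i
            · subst hj; simp
            · rw [Function.update_of_ne hj]; exact (hagree j hj).symm
          refine Finset.mem_image.2 ⟨x' i, ?_, hxeq.symm⟩
          simp only [hT, Finset.mem_filter, Finset.mem_univ, true_and]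
          refine ⟨?_, by rw [← hxeq]; exact hx'B⟩
          intro h
          apply hx'B
          have : x' = x := by rw [hxeq, h, Function.update_eq_self]
          rw [this]; exact hx
        calc ∑ x' ∈ Finset.univ.filter (fun x' => x' ∉ B),
              (if ∀ j, j ≠ i → x j = x' j then pTau s τ i x (x' i) else 0)
            = ∑ x' ∈ (Finset.univ.filter (fun x' => x' ∉ B)).filter
                (fun x' => ∀ j, j ≠ i → x j = x' j), pTau s τ i x (x' i) := hrw
          _ ≤ ∑ x' ∈ T.image (fun a => Function.update x i a), pTau s τ i x (x' i) :=
              Finset.sum_le_sum_of_subset_of_nonneg hsub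
                (fun y _ _ => pnonneg i x (y i))
          _ = ∑ a ∈ T, pTau s τ i x (Function.update x i a i) := by
              apply Finset.sum_image
              intro a _ b _ h
              have := congrFun h i
              simpa using this
          _ = ∑ a ∈ T, pTau s τ i x a := by
              apply Finset.sum_congr rfl; intro a _; rw [Function.update_self]
          _ ≤ ∑ _a ∈ T, E := by
              apply Finset.sum_le_sum
              intro a haT
              simp only [hT, Finset.mem_filter, Finset.mem_univ, true_and] at haT
              exact pbound a haT.1 haT.2
          _ = (T.card : ℝ) * E := by rw [Finset.sum_const, nsmul_eq_mul]
          _ ≤ (Fintype.card V : ℝ) * E := by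
              apply mul_le_mul_of_nonneg_right _ hE0
              exact_mod_cast Finset.card_le_card (Finset.subset_univ T)
      · push_neg at hex
        rw [hrw]
        have hempty : ∀ x' ∈ (Finset.univ.filter (fun x' => x' ∉ B)).filter
            (fun x' => ∀ j, j ≠ i → x j = x' j), pTau s τ i x (x' i) = 0 := by
          intro x' hx'
          simp only [Finset.mem_filter, Finset.mem_univ, true_and] at hx'
          obtain ⟨hx'B, hagree⟩ := hx'
          exfalso
          apply hx'B
          have hxeq : x' = Function.update x i (x' i) := by
            funext j
            by_cases hj : j = i
            · subst hj; simp
            · rw [Function.update_of_ne hj]; exact (hagree j hj).symm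
          rw [hxeq]; exact hex (x' i)
        rw [Finset.sum_eq_zero hempty]
        exact hCE0
    have hne : (n : ℝ) ≠ 0 := by exact_mod_cast hn.ne'
    calc ∑ x' ∈ Finset.univ.filter (fun x' => x' ∉ B), glauberKernel n (pTau s τ) x x'
        = (1 / (n : ℝ)) * ∑ i : Fin n, ∑ x' ∈ Finset.univ.filter (fun x' => x' ∉ B),
            (if ∀ j, j ≠ i → x j = x' j then pTau s τ i x (x' i) else 0) := by
          simp only [glauberKernel]
          rw [← Finset.mul_sum, Finset.sum_comm]
      _ ≤ (1 / (n : ℝ)) * ∑ _i : Fin n, (Fintype.card V : ℝ) * E := by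
          apply mul_le_mul_of_nonneg_left _ (by positivity)
          exact Finset.sum_le_sum (fun i _ => site i)
      _ = (Fintype.card V : ℝ) * E := by
          rw [Finset.sum_const, Finset.card_univ, Fintype.card_fin, nsmul_eq_mul]
          field_simp
  rw [div_le_iff₀ hμB]
  calc ∑ x ∈ B, μ x * ∑ x' ∈ Finset.univ.filter (fun x' => x' ∉ B),
          glauberKernel n (pTau s τ) x x'
      ≤ ∑ x ∈ B, μ x * ((Fintype.card V : ℝ) * E) :=
        Finset.sum_le_sum (fun x hx =>
          mul_le_mul_of_nonneg_left (key x hx) (hμ0 x))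
    _ = (Fintype.card V : ℝ) * E * ∑ x ∈ B, μ x := by
        rw [← Finset.sum_mul]; ring
end

section
/- Let B ⊆ X satisfy the uniform local margin condition with margin Δ⋆ > 0, let μ_τ be the stationary distribution of the (irreducible, aperiodic) Glauber chain P_τ, and assume 0 < μ_τ(B) ≤ 1/2. Then the total-variation mixing time satisfies the exponential lower bound t_mix(1/4) ≥ (1/(4|V|)) · exp(Δ⋆/τ). -/
open Finset

/-- The `t`-step transition probabilities of a kernel `P` (t-fold matrix power). -/
noncomputable def kernelIter {X : Type*} [Fintype X] [DecidableEq X]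
    (P : X → X → ℝ) : ℕ → X → X → ℝ
  | 0 => fun x y => if x = y then 1 else 0
  | (t + 1) => fun x y => ∑ z : X, kernelIter P t x z * P z y

/-- The total-variation mixing time
`t_mix(ε) = min { t : sup_x ‖P^t(x,·) − μ‖_TV ≤ ε }`. -/
noncomputable def mixingTime {X : Type*} [Fintype X] [DecidableEq X]
    (P : X → X → ℝ) (μ : X → ℝ) (ε : ℝ) : ℕ :=
  sInf {t : ℕ | ∀ x : X, tvDist (kernelIter P t x) μ ≤ ε}
section Aux

variable {V : Type*} [Fintype V] [DecidableEq V] [Nonempty V] {n : ℕ}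

lemma sum_agree (x : Fin n → V) (i : Fin n) (g : (Fin n → V) → ℝ) :
    ∑ y : Fin n → V, (if ∀ j, j ≠ i → x j = y j then g y else 0)
      = ∑ a : V, g (Function.update x i a) := by
  have key : ∀ y : Fin n → V, (if ∀ j, j ≠ i → x j = y j then g y else 0)
      = ∑ a : V, if y = Function.update x i a then g (Function.update x i a) else 0 := by
    intro y
    by_cases h : ∀ j, j ≠ i → x j = y j
    · rw [if_pos h]
      have hy : ∀ a : V, y = Function.update x i a ↔ a = y i := by
        intro a
        constructor
        · intro h'; rw [h', Function.update_self]
        · intro h'; subst h'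
          funext j
          by_cases hj : j = i
          · subst hj; rw [Function.update_self]
          · rw [Function.update_of_ne hj]; exact (h j hj).symm
      have : ∀ a : V, (if y = Function.update x i a then g (Function.update x i a) else 0)
          = (if a = y i then g y else 0) := by
        intro a
        by_cases ha : a = y i
        · rw [if_pos ((hy a).mpr ha), if_pos ha]
          congr 1
          exact ((hy a).mpr ha).symm
        · rw [if_neg (fun h' => ha ((hy a).mp h')), if_neg ha]
      rw [Finset.sum_congr rfl (fun a _ => this a)]
      simp
    · rw [if_neg h]
      symm
      apply Finset.sum_eq_zero
      intro a _
      rw [if_neg]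
      intro h'
      apply h
      intro j hj
      rw [h', Function.update_of_ne hj]
  rw [Finset.sum_congr rfl (fun y _ => key y), Finset.sum_comm]
  apply Finset.sum_congr rfl
  intro a _
  simp

variable (s : Fin n → (Fin n → V) → V → ℝ) (τ : ℝ)

lemma pTau_denom_pos (i : Fin n) (x : Fin n → V) :
    0 < ∑ b : V, Real.exp (s i x b / τ) :=
  Finset.sum_pos (fun b _ => Real.exp_pos _) Finset.univ_nonempty

lemma pTau_pos (i : Fin n) (x : Fin n → V) (a : V) : 0 < pTau s τ i x a :=
  div_pos (Real.exp_pos _) (pTau_denom_pos s τ i x)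

lemma pTau_nonneg (i : Fin n) (x : Fin n → V) (a : V) : 0 ≤ pTau s τ i x a :=
  (pTau_pos s τ i x a).le

lemma pTau_sum (i : Fin n) (x : Fin n → V) : ∑ a : V, pTau s τ i x a = 1 := by
  unfold pTau
  rw [← Finset.sum_div]
  exact div_self (pTau_denom_pos s τ i x).ne'

end Aux
section Aux2

variable {V : Type*} [Fintype V] [DecidableEq V] [Nonempty V] {n : ℕ}
variable (s : Fin n → (Fin n → V) → V → ℝ) (τ : ℝ)

lemma glauber_nonneg (x y : Fin n → V) : 0 ≤ glauberKernel n (pTau s τ) x y := by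
  unfold glauberKernel
  apply mul_nonneg (by positivity)
  apply Finset.sum_nonneg
  intro i _
  split
  · exact pTau_nonneg s τ i x (y i)
  · exact le_refl 0

lemma glauber_row (hn : 0 < n) (x : Fin n → V) :
    ∑ y : Fin n → V, glauberKernel n (pTau s τ) x y = 1 := by
  unfold glauberKernel
  rw [← Finset.mul_sum, Finset.sum_comm]
  have : ∀ i : Fin n, (∑ y : Fin n → V, if ∀ j, j ≠ i → x j = y j then pTau s τ i x (y i) else 0) = 1 := by
    intro i
    rw [sum_agree x i (fun y => pTau s τ i x (y i))]
    have : ∀ a : V, pTau s τ i x (Function.update x i a i) = pTau s τ i x a := by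
      intro a; rw [Function.update_self]
    rw [Finset.sum_congr rfl (fun a _ => this a)]
    exact pTau_sum s τ i x
  rw [Finset.sum_congr rfl (fun i _ => this i)]
  simp
  field_simp

lemma glauber_pos (hn : 0 < n) (z y : Fin n → V) (i : Fin n)
    (h : ∀ j, j ≠ i → z j = y j) : 0 < glauberKernel n (pTau s τ) z y := by
  unfold glauberKernel
  apply mul_pos (by positivity)
  apply Finset.sum_pos'
  · intro k _
    split
    · exact pTau_nonneg s τ k z (y k)
    · exact le_refl 0
  · exact ⟨i, Finset.mem_univ i, by rw [if_pos h]; exact pTau_pos s τ i z (y i)⟩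

end Aux2
section Aux3

variable {X : Type*} [Fintype X] [DecidableEq X]

lemma kernelIter_nonneg (P : X → X → ℝ) (hP : ∀ x y, 0 ≤ P x y) :
    ∀ t x y, 0 ≤ kernelIter P t x y := by
  intro t
  induction t with
  | zero => intro x y; unfold kernelIter; split <;> norm_num
  | succ t ih =>
    intro x y
    unfold kernelIter
    exact Finset.sum_nonneg fun z _ => mul_nonneg (ih x z) (hP z y)

lemma kernelIter_row (P : X → X → ℝ) (hP : ∀ x, ∑ y : X, P x y = 1) :
    ∀ t x, ∑ y : X, kernelIter P t x y = 1 := by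
  intro t
  induction t with
  | zero => intro x; unfold kernelIter; simp
  | succ t ih =>
    intro x
    unfold kernelIter
    rw [Finset.sum_comm]
    have : ∀ z : X, ∑ y : X, kernelIter P t x z * P z y = kernelIter P t x z := by
      intro z; rw [← Finset.mul_sum, hP z, mul_one]
    rw [Finset.sum_congr rfl fun z _ => this z, ih x]

lemma kernelIter_succ (P : X → X → ℝ) (t : ℕ) (x y : X) :
    kernelIter P (t + 1) x y = ∑ z : X, kernelIter P t x z * P z y := rfl

lemma kernelIter_add (P : X → X → ℝ) (a b : ℕ) (x y : X) :
    kernelIter P (a + b) x y = ∑ z : X, kernelIter P a x z * kernelIter P b z y := by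
  induction b generalizing y with
  | zero =>
    show kernelIter P a x y = _
    unfold kernelIter
    simp
  | succ b ih =>
    calc kernelIter P (a + (b + 1)) x y
        = ∑ z : X, kernelIter P (a + b) x z * P z y := kernelIter_succ P (a + b) x y
      _ = ∑ z : X, (∑ w : X, kernelIter P a x w * kernelIter P b w z) * P z y := by
          apply Finset.sum_congr rfl
          intro z _
          rw [ih z]
      _ = ∑ w : X, kernelIter P a x w * ∑ z : X, kernelIter P b w z * P z y := by
          simp only [Finset.sum_mul, Finset.mul_sum]
          rw [Finset.sum_comm]
          apply Finset.sum_congr rfl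
          intro w _
          apply Finset.sum_congr rfl
          intro z _
          ring
      _ = ∑ w : X, kernelIter P a x w * kernelIter P (b + 1) w y := by
          apply Finset.sum_congr rfl
          intro w _
          rw [kernelIter_succ]

lemma kernelIter_stat (P : X → X → ℝ) (μ : X → ℝ)
    (hstat : ∀ y, ∑ x : X, μ x * P x y = μ y) :
    ∀ t y, ∑ x : X, μ x * kernelIter P t x y = μ y := by
  intro t
  induction t with
  | zero => intro y; unfold kernelIter; simp
  | succ t ih =>
    intro y
    unfold kernelIter
    calc ∑ x : X, μ x * ∑ z : X, kernelIter P t x z * P z y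
        = ∑ z : X, (∑ x : X, μ x * kernelIter P t x z) * P z y := by
          simp only [Finset.mul_sum, Finset.sum_mul]
          rw [Finset.sum_comm]
          apply Finset.sum_congr rfl
          intro z _
          apply Finset.sum_congr rfl
          intro x _
          ring
      _ = ∑ z : X, μ z * P z y := by
          apply Finset.sum_congr rfl
          intro z _
          rw [ih z]
      _ = μ y := hstat y

lemma tv_set_bound (f g : X → ℝ) (hfg : ∑ x : X, f x = ∑ x : X, g x) (E : Finset X) :
    (∑ y ∈ E, g y) - (∑ y ∈ E, f y) ≤ tvDist f g := by
  have hsplit : ∑ y ∈ Finset.univ \ E, (f y - g y) + ∑ y ∈ E, (f y - g y)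
      = ∑ y : X, (f y - g y) := Finset.sum_sdiff (Finset.subset_univ E)
  have htot : ∑ y : X, (f y - g y) = 0 := by
    rw [Finset.sum_sub_distrib, hfg, sub_self]
  have h1 : |∑ y ∈ E, (f y - g y)| ≤ ∑ y ∈ E, |f y - g y| :=
    Finset.abs_sum_le_sum_abs _ _
  have h2 : |∑ y ∈ Finset.univ \ E, (f y - g y)| ≤ ∑ y ∈ Finset.univ \ E, |f y - g y| :=
    Finset.abs_sum_le_sum_abs _ _
  have hA : ∑ y ∈ Finset.univ \ E, (f y - g y) = - ∑ y ∈ E, (f y - g y) := by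
    rw [htot] at hsplit; linarith
  have hsplit2 : ∑ y ∈ Finset.univ \ E, |f y - g y| + ∑ y ∈ E, |f y - g y|
      = ∑ y : X, |f y - g y| := Finset.sum_sdiff (Finset.subset_univ E)
  unfold tvDist
  have habs : |∑ y ∈ E, (f y - g y)| ≤ (1/2) * ∑ a : X, |f a - g a| := by
    rw [hA, abs_neg] at h2
    rw [← hsplit2]
    linarith
  have : (∑ y ∈ E, g y) - (∑ y ∈ E, f y) = -(∑ y ∈ E, (f y - g y)) := by
    rw [Finset.sum_sub_distrib]; ring
  rw [this]
  calc -(∑ y ∈ E, (f y - g y)) ≤ |∑ y ∈ E, (f y - g y)| := neg_le_abs _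
    _ ≤ _ := habs

end Aux3
section Aux4

variable {V : Type*} [Fintype V] [DecidableEq V] [Nonempty V] {n : ℕ}
variable {s : Fin n → (Fin n → V) → V → ℝ} {τ : ℝ} {B : Finset (Fin n → V)} {Δstar : ℝ}

lemma pTau_exit_le (hτ : 0 < τ) (hmargin : UniformLocalMargin s B Δstar)
    {x : Fin n → V} (hx : x ∈ B) (i : Fin n) (a : V)
    (ha : Function.update x i a ∉ B) :
    pTau s τ i x a ≤ Real.exp (-(Δstar / τ)) := by
  obtain ⟨hmax, hgap⟩ := hmargin x hx i ⟨a, ha⟩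
  have hax : a ≠ x i := by
    intro h
    subst h
    rw [Function.update_eq_self] at ha
    exact ha hx
  have h1 : Δstar ≤ s i x (x i) - s i x a := hgap a hax ha
  have hD : Real.exp (s i x (x i) / τ) ≤ ∑ b : V, Real.exp (s i x b / τ) :=
    Finset.single_le_sum (f := fun b : V => Real.exp (s i x b / τ))
      (fun b _ => (Real.exp_pos _).le) (Finset.mem_univ _)
  calc pTau s τ i x a
      ≤ Real.exp (s i x a / τ) / Real.exp (s i x (x i) / τ) :=
        div_le_div_of_nonneg_left (Real.exp_pos _).le (Real.exp_pos _) hD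
    _ = Real.exp (s i x a / τ - s i x (x i) / τ) := (Real.exp_sub _ _).symm
    _ ≤ Real.exp (-(Δstar / τ)) := by
        apply Real.exp_le_exp.mpr
        rw [div_sub_div_same, neg_div'] at *
        exact (div_le_div_iff_of_pos_right hτ).mpr (by linarith)

lemma escape_one (hn : 0 < n) (hτ : 0 < τ) (hmargin : UniformLocalMargin s B Δstar)
    {x : Fin n → V} (hx : x ∈ B) :
    ∑ y ∈ Finset.univ \ B, glauberKernel n (pTau s τ) x y
      ≤ (Fintype.card V : ℝ) * Real.exp (-(Δstar / τ)) := by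
  have hfilt : (Finset.univ \ B : Finset (Fin n → V)) = Finset.univ.filter (fun y => y ∉ B) := by
    ext y; simp
  have site : ∀ i : Fin n,
      ∑ y ∈ Finset.univ \ B, (if ∀ j, j ≠ i → x j = y j then pTau s τ i x (y i) else 0)
        ≤ (Fintype.card V : ℝ) * Real.exp (-(Δstar / τ)) := by
    intro i
    set g : (Fin n → V) → ℝ := fun y => if y ∈ B then 0 else pTau s τ i x (y i) with hg
    have step1 : ∑ y ∈ Finset.univ \ B, (if ∀ j, j ≠ i → x j = y j then pTau s τ i x (y i) else 0)
        = ∑ y : Fin n → V, (if ∀ j, j ≠ i → x j = y j then g y else 0) := by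
      rw [hfilt, Finset.sum_filter]
      apply Finset.sum_congr rfl
      intro y _
      by_cases hagree : ∀ j, j ≠ i → x j = y j
      · by_cases hyB : y ∈ B <;> simp [hagree, hyB, hg]
      · by_cases hyB : y ∈ B <;> simp [hagree, hyB]
    rw [step1, sum_agree x i g]
    have hbound : ∀ a : V, g (Function.update x i a) ≤ Real.exp (-(Δstar / τ)) := by
      intro a
      rw [hg]
      simp only [Function.update_self]
      by_cases hB : Function.update x i a ∈ B
      · rw [if_pos hB]; exact (Real.exp_pos _).le
      · rw [if_neg hB]; exact pTau_exit_le hτ hmargin hx i a hB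
    calc ∑ a : V, g (Function.update x i a)
        ≤ ∑ _a : V, Real.exp (-(Δstar / τ)) := Finset.sum_le_sum (fun a _ => hbound a)
      _ = (Fintype.card V : ℝ) * Real.exp (-(Δstar / τ)) := by
          rw [Finset.sum_const, nsmul_eq_mul, Finset.card_univ]
  calc ∑ y ∈ Finset.univ \ B, glauberKernel n (pTau s τ) x y
      = (1 / (n : ℝ)) * ∑ i : Fin n, ∑ y ∈ Finset.univ \ B,
          (if ∀ j, j ≠ i → x j = y j then pTau s τ i x (y i) else 0) := by
        unfold glauberKernel
        rw [← Finset.mul_sum, Finset.sum_comm]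
    _ ≤ (1 / (n : ℝ)) * ∑ _i : Fin n, ((Fintype.card V : ℝ) * Real.exp (-(Δstar / τ))) := by
        apply mul_le_mul_of_nonneg_left (Finset.sum_le_sum (fun i _ => site i)) (by positivity)
    _ = (Fintype.card V : ℝ) * Real.exp (-(Δstar / τ)) := by
        rw [Finset.sum_const, nsmul_eq_mul, Finset.card_univ, Fintype.card_fin]
        field_simp

lemma escape_subset_one (hn : 0 < n) (z : Fin n → V) :
    ∑ y ∈ Finset.univ \ B, glauberKernel n (pTau s τ) z y ≤ 1 := by
  rw [← glauber_row s τ hn z]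
  exact Finset.sum_le_sum_of_subset_of_nonneg (Finset.subset_univ _)
    (fun y _ _ => glauber_nonneg s τ z y)

lemma escape_iter (hn : 0 < n) (hτ : 0 < τ) (hmargin : UniformLocalMargin s B Δstar) :
    ∀ (t : ℕ) (x : Fin n → V), x ∈ B →
    ∑ y ∈ Finset.univ \ B, kernelIter (glauberKernel n (pTau s τ)) t x y
      ≤ (t : ℝ) * ((Fintype.card V : ℝ) * Real.exp (-(Δstar / τ))) := by
  set P := glauberKernel n (pTau s τ) with hP
  set δ := (Fintype.card V : ℝ) * Real.exp (-(Δstar / τ)) with hδ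
  have hδ0 : 0 ≤ δ := by positivity
  intro t
  induction t with
  | zero =>
    intro x hx
    have : ∑ y ∈ Finset.univ \ B, kernelIter P 0 x y = 0 := by
      apply Finset.sum_eq_zero
      intro y hy
      show (if x = y then (1:ℝ) else 0) = 0
      rw [if_neg]
      intro h
      subst h
      exact (Finset.mem_sdiff.mp hy).2 hx
    rw [this]
    simp
  | succ t ih =>
    intro x hx
    have hK0 := kernelIter_nonneg P (glauber_nonneg s τ) t
    have hKrow := kernelIter_row P (glauber_row s τ hn) t x
    calc ∑ y ∈ Finset.univ \ B, kernelIter P (t + 1) x y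
        = ∑ z : Fin n → V, kernelIter P t x z * (∑ y ∈ Finset.univ \ B, P z y) := by
          simp only [kernelIter_succ]
          rw [Finset.sum_comm]
          apply Finset.sum_congr rfl
          intro z _
          rw [Finset.mul_sum]
      _ = (∑ z ∈ Finset.univ \ B, kernelIter P t x z * (∑ y ∈ Finset.univ \ B, P z y))
          + ∑ z ∈ B, kernelIter P t x z * (∑ y ∈ Finset.univ \ B, P z y) :=
          (Finset.sum_sdiff (Finset.subset_univ B)).symm
      _ ≤ (∑ z ∈ Finset.univ \ B, kernelIter P t x z)
          + (∑ z ∈ B, kernelIter P t x z) * δ := by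
          apply add_le_add
          · apply Finset.sum_le_sum
            intro z _
            calc kernelIter P t x z * (∑ y ∈ Finset.univ \ B, P z y)
                ≤ kernelIter P t x z * 1 :=
                  mul_le_mul_of_nonneg_left (escape_subset_one hn z) (hK0 x z)
              _ = kernelIter P t x z := mul_one _
          · rw [Finset.sum_mul]
            apply Finset.sum_le_sum
            intro z hz
            exact mul_le_mul_of_nonneg_left (escape_one hn hτ hmargin hz) (hK0 x z)
      _ ≤ (t : ℝ) * δ + 1 * δ := by
          apply add_le_add (ih x hx)
          apply mul_le_mul_of_nonneg_right _ hδ0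
          rw [← hKrow]
          exact Finset.sum_le_sum_of_subset_of_nonneg (Finset.subset_univ _)
            (fun y _ _ => hK0 x y)
      _ = ((t : ℝ) + 1) * δ := by ring
      _ = ((t + 1 : ℕ) : ℝ) * δ := by push_cast; ring

end Aux4
section Aux5

variable {V : Type*} [Fintype V] [DecidableEq V] [Nonempty V] {n : ℕ}
variable {s : Fin n → (Fin n → V) → V → ℝ} {τ : ℝ}

lemma kernelIter_pos (hn : 0 < n) :
    ∀ (t : ℕ) (x y : Fin n → V),
      (Finset.univ.filter (fun j => x j ≠ y j)).card ≤ t →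
      0 < kernelIter (glauberKernel n (pTau s τ)) t x y := by
  set P := glauberKernel n (pTau s τ) with hP
  have hP0 : ∀ x y, 0 ≤ P x y := glauber_nonneg s τ
  intro t
  induction t with
  | zero =>
    intro x y h
    have hxy : x = y := by
      funext j
      by_contra hj
      have : j ∈ Finset.univ.filter (fun j => x j ≠ y j) := by simp [hj]
      have := Finset.card_pos.mpr ⟨j, this⟩
      omega
    subst hxy
    show (0:ℝ) < if x = x then 1 else 0
    simp
  | succ t ih =>
    intro x y h
    rw [kernelIter_succ]
    by_cases hxy : x = y
    · subst hxy
      apply Finset.sum_pos'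
      · intro z _; exact mul_nonneg (kernelIter_nonneg P hP0 t x z) (hP0 z x)
      · refine ⟨x, Finset.mem_univ x, mul_pos (ih x x (by simp)) ?_⟩
        exact glauber_pos s τ hn x x ⟨0, hn⟩ (fun j _ => rfl)
    · obtain ⟨i, hi⟩ : ∃ i, x i ≠ y i := by
        by_contra hc
        push_neg at hc
        exact hxy (funext hc)
      set z₀ := Function.update y i (x i) with hz₀
      have hiz : ∀ j, j ≠ i → z₀ j = y j := fun j hj => Function.update_of_ne hj _ _
      have hcard : (Finset.univ.filter (fun j => x j ≠ z₀ j)).card ≤ t := by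
        have heq : Finset.univ.filter (fun j => x j ≠ z₀ j)
            = (Finset.univ.filter (fun j => x j ≠ y j)).erase i := by
          ext j
          by_cases hj : j = i
          · subst hj
            simp [hz₀, Function.update_self]
          · simp [hj, hiz j hj]
        have hmem : i ∈ Finset.univ.filter (fun j => x j ≠ y j) := by simp [hi]
        rw [heq, Finset.card_erase_of_mem hmem]
        omega
      apply Finset.sum_pos'
      · intro z _; exact mul_nonneg (kernelIter_nonneg P hP0 t x z) (hP0 z y)
      · exact ⟨z₀, Finset.mem_univ z₀,
          mul_pos (ih x z₀ hcard) (glauber_pos s τ hn z₀ y i hiz)⟩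

end Aux5

section Aux6

variable {X : Type*} [Fintype X] [DecidableEq X] [Nonempty X]

lemma contract (Q : X → X → ℝ)
    (hQ1 : ∀ x, ∑ y : X, Q x y = 1) (ε : ℝ) (hε : ∀ x y, ε ≤ Q x y)
    (f g : X → ℝ) (hfg : ∑ x : X, f x = ∑ x : X, g x) :
    tvDist (fun y => ∑ z : X, f z * Q z y) (fun y => ∑ z : X, g z * Q z y)
      ≤ (1 - (Fintype.card X : ℝ) * ε) * tvDist f g := by
  have key : ∀ y : X, |(∑ z : X, f z * Q z y) - ∑ z : X, g z * Q z y|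
      ≤ ∑ z : X, |f z - g z| * (Q z y - ε) := by
    intro y
    have heq : (∑ z : X, f z * Q z y) - ∑ z : X, g z * Q z y
        = ∑ z : X, (f z - g z) * (Q z y - ε) := by
      have h0 : ∑ z : X, (f z - g z) * ε = 0 := by
        rw [← Finset.sum_mul, Finset.sum_sub_distrib, hfg, sub_self, zero_mul]
      calc (∑ z : X, f z * Q z y) - ∑ z : X, g z * Q z y
          = (∑ z : X, (f z * Q z y - g z * Q z y)) - ∑ z : X, (f z - g z) * ε := by
            rw [h0, Finset.sum_sub_distrib, sub_zero]
        _ = ∑ z : X, ((f z * Q z y - g z * Q z y) - (f z - g z) * ε) :=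
            (Finset.sum_sub_distrib _ _).symm
        _ = ∑ z : X, (f z - g z) * (Q z y - ε) := by
            apply Finset.sum_congr rfl; intro z _; ring
    rw [heq]
    refine (Finset.abs_sum_le_sum_abs _ _).trans ?_
    apply Finset.sum_le_sum
    intro z _
    rw [abs_mul, abs_of_nonneg (sub_nonneg.mpr (hε z y))]
  unfold tvDist
  calc (1/2) * ∑ y : X, |(∑ z : X, f z * Q z y) - ∑ z : X, g z * Q z y|
      ≤ (1/2) * ∑ y : X, ∑ z : X, |f z - g z| * (Q z y - ε) := by
        apply mul_le_mul_of_nonneg_left (Finset.sum_le_sum fun y _ => key y) (by norm_num)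
    _ = (1/2) * ∑ z : X, |f z - g z| * (1 - (Fintype.card X : ℝ) * ε) := by
        rw [Finset.sum_comm]
        congr 1
        apply Finset.sum_congr rfl
        intro z _
        rw [← Finset.mul_sum, Finset.sum_sub_distrib, hQ1 z, Finset.sum_const,
          nsmul_eq_mul, Finset.card_univ]
    _ = (1 - (Fintype.card X : ℝ) * ε) * ((1/2) * ∑ z : X, |f z - g z|) := by
        rw [← Finset.sum_mul]
        ring

lemma card_eps_le_one (Q : X → X → ℝ)
    (hQ1 : ∀ x, ∑ y : X, Q x y = 1) (ε : ℝ) (hε : ∀ x y, ε ≤ Q x y) :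
    (Fintype.card X : ℝ) * ε ≤ 1 := by
  obtain ⟨x⟩ := ‹Nonempty X›
  calc (Fintype.card X : ℝ) * ε = ∑ _y : X, ε := by
        rw [Finset.sum_const, nsmul_eq_mul, Finset.card_univ]
    _ ≤ ∑ y : X, Q x y := Finset.sum_le_sum fun y _ => hε x y
    _ = 1 := hQ1 x

end Aux6

/-- **exponential lower bound on mixing time.** Let `B` satisfy the uniform
local margin condition with margin `Δ⋆ > 0`, let `μ` be the stationary distribution of the
Glauber chain for the strictly positive temperature-scaled conditionals, and assume
`0 < μ(B) ≤ 1/2`. Then `t_mix(1/4) ≥ (1/(4|V|))·exp(Δ⋆/τ)`. -/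
theorem mixing_time_exponential_lower_bound {V : Type*} [Fintype V] [DecidableEq V]
    [Nonempty V]
    (n : ℕ) (hn : 0 < n) (s : Fin n → (Fin n → V) → V → ℝ)
    (hloc : ∀ (i : Fin n) (x y : Fin n → V), (∀ k, k ≠ i → x k = y k) → s i x = s i y)
    (τ : ℝ) (hτ : 0 < τ)
    (B : Finset (Fin n → V)) (Δstar : ℝ) (hΔ : 0 < Δstar)
    (hmargin : UniformLocalMargin s B Δstar)
    (μ : (Fin n → V) → ℝ)
    (hμ0 : ∀ x, 0 ≤ μ x) (hμ1 : ∑ x : Fin n → V, μ x = 1)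
    (hμstat : ∀ y : Fin n → V,
      ∑ x : Fin n → V, μ x * glauberKernel n (pTau s τ) x y = μ y)
    (hμBpos : 0 < ∑ x ∈ B, μ x) (hμBhalf : ∑ x ∈ B, μ x ≤ 1 / 2) :
    (1 / (4 * (Fintype.card V : ℝ))) * Real.exp (Δstar / τ)
      ≤ (mixingTime (glauberKernel n (pTau s τ)) μ (1 / 4) : ℝ) := by
  classical
  set P := glauberKernel n (pTau s τ) with hPdef
  have hP0 : ∀ x y, 0 ≤ P x y := glauber_nonneg s τ
  have hProw : ∀ x, ∑ y : Fin n → V, P x y = 1 := glauber_row s τ hn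
  have hK0 := kernelIter_nonneg P hP0
  have hKrow := kernelIter_row P hProw
  -- the n-step kernel is strictly positive
  set Q : (Fin n → V) → (Fin n → V) → ℝ := kernelIter P n with hQdef
  have hQpos : ∀ x y, 0 < Q x y := by
    intro x y
    apply kernelIter_pos hn n x y
    calc (Finset.univ.filter (fun j => x j ≠ y j)).card
        ≤ (Finset.univ : Finset (Fin n)).card := Finset.card_filter_le _ _
      _ = n := by simp
  have hne : (Finset.univ : Finset ((Fin n → V) × (Fin n → V))).Nonempty :=
    Finset.univ_nonempty
  set ε := Finset.univ.inf' hne (fun p : (Fin n → V) × (Fin n → V) => Q p.1 p.2) with hεdef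
  have hεpos : 0 < ε := by
    rw [hεdef, Finset.lt_inf'_iff]
    intro p _
    exact hQpos p.1 p.2
  have hεle : ∀ x y, ε ≤ Q x y := fun x y =>
    Finset.inf'_le (fun p : (Fin n → V) × (Fin n → V) => Q p.1 p.2)
      (Finset.mem_univ (x, y))
  have hQrow : ∀ x, ∑ y : Fin n → V, Q x y = 1 := hKrow n
  set c : ℝ := 1 - (Fintype.card (Fin n → V) : ℝ) * ε with hcdef
  have hc0 : 0 ≤ c := by
    have := card_eps_le_one Q hQrow ε hεle
    linarith
  have hc1 : c < 1 := by
    have hcard : (0:ℝ) < (Fintype.card (Fin n → V) : ℝ) := by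
      exact_mod_cast Fintype.card_pos
    have : 0 < (Fintype.card (Fin n → V) : ℝ) * ε := mul_pos hcard hεpos
    rw [hcdef]
    linarith
  -- μ is stationary for Q
  have hμQ : ∀ y, ∑ z : Fin n → V, μ z * Q z y = μ y :=
    kernelIter_stat P μ hμstat n
  -- base TV bound
  have tv_le_one : ∀ f : (Fin n → V) → ℝ, (∀ y, 0 ≤ f y) →
      (∑ y : Fin n → V, f y = 1) → tvDist f μ ≤ 1 := by
    intro f hf hf1
    unfold tvDist
    calc (1/2) * ∑ a : Fin n → V, |f a - μ a|
        ≤ (1/2) * ∑ a : Fin n → V, (f a + μ a) := by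
          apply mul_le_mul_of_nonneg_left _ (by norm_num)
          apply Finset.sum_le_sum
          intro a _
          calc |f a - μ a| ≤ |f a| + |μ a| := abs_sub _ _
            _ = f a + μ a := by rw [abs_of_nonneg (hf a), abs_of_nonneg (hμ0 a)]
      _ = 1 := by rw [Finset.sum_add_distrib, hf1, hμ1]; norm_num
  -- geometric contraction
  have key : ∀ (k : ℕ) (x : Fin n → V),
      tvDist (kernelIter P (k * n) x) μ ≤ c ^ k := by
    intro k
    induction k with
    | zero =>
      intro x
      simp only [Nat.zero_mul, pow_zero]
      apply tv_le_one _ (fun y => hK0 0 x y) (hKrow 0 x)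
    | succ k ih =>
      intro x
      have e1 : kernelIter P ((k + 1) * n) x
          = fun y => ∑ z : Fin n → V, kernelIter P (k * n) x z * Q z y := by
        funext y
        rw [show (k + 1) * n = k * n + n by ring]
        exact kernelIter_add P (k * n) n x y
      have e2 : (fun y => ∑ z : Fin n → V, μ z * Q z y) = μ := funext hμQ
      have hcon := contract Q hQrow ε hεle (kernelIter P (k * n) x) μ
        (by rw [hKrow (k * n) x, hμ1])
      rw [e2] at hcon
      rw [e1]
      calc tvDist (fun y => ∑ z : Fin n → V, kernelIter P (k * n) x z * Q z y) μ
          ≤ c * tvDist (kernelIter P (k * n) x) μ := hcon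
        _ ≤ c * c ^ k := mul_le_mul_of_nonneg_left (ih x) hc0
        _ = c ^ (k + 1) := by ring
  -- the mixing set is nonempty
  obtain ⟨k, hk⟩ := exists_pow_lt_of_lt_one (show (0:ℝ) < 1/4 by norm_num) hc1
  have hSne : {t : ℕ | ∀ x : Fin n → V, tvDist (kernelIter P t x) μ ≤ 1/4}.Nonempty :=
    ⟨k * n, fun x => (key k x).trans hk.le⟩
  have hT : mixingTime P μ (1/4) ∈
      {t : ℕ | ∀ x : Fin n → V, tvDist (kernelIter P t x) μ ≤ 1/4} :=
    Nat.sInf_mem hSne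
  set T := mixingTime P μ (1/4) with hTdef
  -- pick a point of B
  have hBne : B.Nonempty := by
    rcases B.eq_empty_or_nonempty with h | h
    · rw [h] at hμBpos; simp at hμBpos
    · exact h
  obtain ⟨x₀, hx₀⟩ := hBne
  -- escape probability bound
  set δ : ℝ := (Fintype.card V : ℝ) * Real.exp (-(Δstar / τ)) with hδdef
  have h3 : ∑ y ∈ Finset.univ \ B, kernelIter P T x₀ y ≤ (T : ℝ) * δ :=
    escape_iter hn hτ hmargin T x₀ hx₀
  have h1 : (∑ y ∈ Finset.univ \ B, μ y)
      - (∑ y ∈ Finset.univ \ B, kernelIter P T x₀ y) ≤ tvDist (kernelIter P T x₀) μ :=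
    tv_set_bound _ _ (by rw [hKrow T x₀, hμ1]) _
  have h2 : (1:ℝ)/2 ≤ ∑ y ∈ Finset.univ \ B, μ y := by
    have := Finset.sum_sdiff (f := μ) (Finset.subset_univ B)
    rw [hμ1] at this
    linarith
  have h4 : tvDist (kernelIter P T x₀) μ ≤ 1/4 := hT x₀
  have h5 : (1:ℝ)/4 ≤ (T : ℝ) * δ := by linarith
  -- final algebra
  have hcV : (0:ℝ) < (Fintype.card V : ℝ) := by exact_mod_cast Fintype.card_pos
  have hE : (0:ℝ) < Real.exp (Δstar / τ) := Real.exp_pos _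
  have hEmul : Real.exp (-(Δstar / τ)) * Real.exp (Δstar / τ) = 1 := by
    rw [← Real.exp_add]
    simp
  have h6 : (1/4) * Real.exp (Δstar / τ) ≤ (T : ℝ) * (Fintype.card V : ℝ) := by
    have := mul_le_mul_of_nonneg_right h5 hE.le
    calc (1/4) * Real.exp (Δstar / τ) ≤ (T : ℝ) * δ * Real.exp (Δstar / τ) := this
      _ = (T : ℝ) * (Fintype.card V : ℝ)
          * (Real.exp (-(Δstar / τ)) * Real.exp (Δstar / τ)) := by rw [hδdef]; ring
      _ = (T : ℝ) * (Fintype.card V : ℝ) := by rw [hEmul, mul_one]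
  rw [div_mul_eq_mul_div, one_mul, div_le_iff₀ (by positivity : (0:ℝ) < 4 * (Fintype.card V : ℝ))]
  push_cast
  nlinarith
end
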